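/- arXiv:1307.7070 — 4 statements merged into one kernel-verified Lean document; each statement's English description precedes it below -/
import Mathlib

section
/- For every ν ∈ ℝ and every fixed t ≥ 0, the random variable A^{(ν)}_t = ∫_0^t exp(2 B^{(ν)}_u) du has the same distribution as exp(2 B^{(ν)}_t) · ∫_0^t exp(−2 B^{(ν)}_s) ds (i.e., Yor's process at time t equals in distribution the geometric Brownian motion with affine drift X^{(ν)}_t started at X_0 = 0). -/
open MeasureTheory ProbabilityTheory Real Filter Set
open scoped ENNReal NNReal

/-- A standard one-dimensional Brownian motion on `(Ω, ℱ, P)`: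
measurable coordinates, starts at `0`, continuous paths, Gaussian
increments with variance `t - s`, and independent increments. -/
structure IsStandardBrownianMotion {Ω : Type*} [MeasurableSpace Ω]
    (P : Measure Ω) (B : ℝ → Ω → ℝ) : Prop where
  measurable : ∀ t : ℝ, Measurable (B t)
  init : ∀ᵐ ω ∂P, B 0 ω = 0
  cont : ∀ᵐ ω ∂P, Continuous fun t => B t ω
  gauss_incr : ∀ s t : ℝ, 0 ≤ s → s ≤ t →
    P.map (fun ω => B t ω - B s ω) = gaussianReal 0 (Real.toNNReal (t - s))
  indep_incr : ∀ t : ℕ → ℝ, Monotone t →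
    iIndepFun (fun i ω => B (t (i + 1)) ω - B (t i) ω) P

/-- First hitting time of level `x` by the path `t ↦ f t ω`, valued in `ℝ≥0∞`
(`∞` if the level is never attained). -/
noncomputable def hitTime {Ω : Type*} (f : ℝ → Ω → ℝ) (x : ℝ) (ω : Ω) : ℝ≥0∞ :=
  ⨅ (t : ℝ) (_ : 0 ≤ t ∧ f t ω = x), ENNReal.ofReal t

/-- Yor's process `A^{(ν)}_t = ∫_0^t exp(2 B^{(ν)}_u) du` with `B^{(ν)}_u = B_u + ν u`. -/
noncomputable def yorA {Ω : Type*} (B : ℝ → Ω → ℝ) (ν : ℝ) (t : ℝ) (ω : Ω) : ℝ :=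
  ∫ u in (0:ℝ)..t, Real.exp (2 * (B u ω + ν * u))

/-- Geometric Brownian motion with affine drift
`Y^{(ν)}_t = exp(2 B^{(ν)}_t) (y − ∫_0^t exp(−2 B^{(ν)}_s) ds)`, started at `y`. -/
noncomputable def procY {Ω : Type*} (B : ℝ → Ω → ℝ) (ν y : ℝ) (t : ℝ) (ω : Ω) : ℝ :=
  Real.exp (2 * (B t ω + ν * t)) *
    (y - ∫ s in (0:ℝ)..t, Real.exp (-(2 * (B s ω + ν * s))))

/-- `Y^{(μ,σ)}` started at `x`: solution of `dY = (μ Y − 1) dt + σ Y dB`. -/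
noncomputable def procYgen {Ω : Type*} (B : ℝ → Ω → ℝ) (μ σ x : ℝ) (t : ℝ) (ω : Ω) : ℝ :=
  Real.exp ((μ - σ ^ 2 / 2) * t + σ * B t ω) *
    (x - ∫ u in (0:ℝ)..t, Real.exp (-((μ - σ ^ 2 / 2) * u + σ * B u ω)))

/-- `X^{(μ,σ)}` started at `x`: solution of `dX = (μ X + 1) dt + σ X dB`. -/
noncomputable def procXgen {Ω : Type*} (B : ℝ → Ω → ℝ) (μ σ x : ℝ) (t : ℝ) (ω : Ω) : ℝ :=
  Real.exp ((μ - σ ^ 2 / 2) * t + σ * B t ω) *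
    (x + ∫ u in (0:ℝ)..t, Real.exp (-((μ - σ ^ 2 / 2) * u + σ * B u ω)))

/-- Kummer's confluent hypergeometric function of the first kind. -/
noncomputable def kummerM (a b z : ℝ) : ℝ :=
  ∑' n : ℕ, ((ascPochhammer ℝ n).eval a / (ascPochhammer ℝ n).eval b) * z ^ n / n.factorial

/-- Kummer's function of the second kind (integral representation, valid for `a, z > 0`). -/
noncomputable def kummerU (a b z : ℝ) : ℝ :=
  (1 / Real.Gamma a) *
    ∫ t in Set.Ioi (0:ℝ), Real.exp (-z * t) * t ^ (a - 1) * (1 + t) ^ (b - a - 1)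

/-- Modified Bessel function of the first kind. -/
noncomputable def besselI (ν z : ℝ) : ℝ :=
  ∑' n : ℕ, (z / 2) ^ (2 * (n : ℝ) + ν) / (n.factorial * Real.Gamma ((n : ℝ) + ν + 1))

/-- Lower incomplete gamma function `γ(ν, x) = ∫_0^x t^{ν−1} e^{−t} dt`. -/
noncomputable def lowerGamma (ν x : ℝ) : ℝ :=
  ∫ t in (0:ℝ)..x, t ^ (ν - 1) * Real.exp (-t)

/-- Exponential integral `E₁(z) = ∫_z^∞ e^{−t}/t dt`. -/
noncomputable def expE1 (z : ℝ) : ℝ :=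
  ∫ t in Set.Ioi z, Real.exp (-t) / t

/-- GMWB policyholder's fund value:
`F_t = e^{(r−m−σ²/2)t + σ B_t}(G − w ∫_0^t e^{−(r−m−σ²/2)u − σ B_u} du)`. -/
noncomputable def fundF {Ω : Type*} (B : ℝ → Ω → ℝ) (r m σ G w : ℝ) (t : ℝ) (ω : Ω) : ℝ :=
  Real.exp ((r - m - σ ^ 2 / 2) * t + σ * B t ω) *
    (G - w * ∫ u in (0:ℝ)..t, Real.exp (-((r - m - σ ^ 2 / 2) * u + σ * B u ω)))


section YorAux
open scoped Topology


lemma leftSum_tendsto (g : ℝ → ℝ) (hg : Continuous g) (t : ℝ) (ht : 0 ≤ t) :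
    Tendsto (fun n : ℕ => (t / n) * ∑ k ∈ Finset.range n, g (t * k / n)) atTop
      (𝓝 (∫ u in (0:ℝ)..t, g u)) := by
  rcases eq_or_lt_of_le ht with h0 | h0
  · simp [← h0]
  rw [Metric.tendsto_atTop]
  intro ε hε
  obtain ⟨δ, hδ, hmod⟩ := Metric.uniformContinuousOn_iff.1
    (isCompact_Icc.uniformContinuousOn_of_continuous (hg.continuousOn (s := Icc 0 t)))
    (ε / (2 * (t + 1))) (by positivity)
  obtain ⟨N, hN⟩ := exists_nat_gt (t / δ)
  refine ⟨N + 1, fun n hn => ?_⟩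
  have hn1 : 1 ≤ n := le_trans (Nat.le_add_left 1 N) hn
  have hnpos : (0:ℝ) < n := by exact_mod_cast hn1
  have htn : t / n < δ := by
    rw [div_lt_iff₀ hnpos]
    have h1 : t / δ < n := lt_of_lt_of_le hN (by exact_mod_cast Nat.le_of_succ_le hn)
    calc t = (t / δ) * δ := by field_simp
    _ < n * δ := mul_lt_mul_of_pos_right h1 hδ
    _ = δ * n := mul_comm _ _
  set s : ℕ → ℝ := fun k => t * k / n with hs
  have hstep : ∀ k : ℕ, s (k + 1) - s k = t / n := by
    intro k; simp only [hs]; push_cast; field_simp; ring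
  have hsmono : ∀ k, s k ≤ s (k + 1) := by
    intro k
    have := hstep k
    nlinarith [div_pos h0 hnpos]
  have hmem : ∀ k : ℕ, k ≤ n → s k ∈ Icc (0:ℝ) t := by
    intro k hk
    constructor
    · positivity
    · rw [hs]; rw [div_le_iff₀ hnpos]
      have : (k:ℝ) ≤ n := by exact_mod_cast hk
      nlinarith
  have hint : ∀ k < n, IntervalIntegrable g volume (s k) (s (k + 1)) :=
    fun k _ => hg.intervalIntegrable _ _
  have hsplit : ∑ k ∈ Finset.range n, ∫ u in s k..s (k+1), g u = ∫ u in (0:ℝ)..t, g u := by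
    rw [intervalIntegral.sum_integral_adjacent_intervals hint]
    have h1 : s 0 = 0 := by simp [hs]
    have h2 : s n = t := by rw [hs]; field_simp
    rw [h1, h2]
  have hSn : (t / n) * ∑ k ∈ Finset.range n, g (s k)
      = ∑ k ∈ Finset.range n, ∫ _ in s k..s (k+1), g (s k) := by
    rw [Finset.mul_sum]
    refine Finset.sum_congr rfl fun k _ => ?_
    rw [intervalIntegral.integral_const, hstep k, smul_eq_mul]
  rw [Real.dist_eq, ← hsplit, hSn, ← Finset.sum_sub_distrib]
  have hterm : ∀ k ∈ Finset.range n,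
      |(∫ _ in s k..s (k+1), g (s k)) - ∫ u in s k..s (k+1), g u| ≤ (ε / (2 * (t + 1))) * (t / n) := by
    intro k hk
    rw [Finset.mem_range] at hk
    rw [← intervalIntegral.integral_sub (intervalIntegrable_const) (hint k hk)]
    have hb : ∀ u ∈ Set.uIoc (s k) (s (k+1)), ‖g (s k) - g u‖ ≤ ε / (2 * (t + 1)) := by
      intro u hu
      rw [Set.uIoc_of_le (hsmono k)] at hu
      have hu1 : u ∈ Icc (0:ℝ) t := by
        constructor
        · exact le_trans (hmem k hk.le).1 hu.1.le
        · exact le_trans hu.2 (hmem (k+1) hk).2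
      have hd : dist (s k) u < δ := by
        rw [Real.dist_eq, abs_of_nonpos (by linarith [hu.1.le]), neg_sub]
        have : u - s k ≤ t / n := by
          have := hstep k; linarith [hu.2]
        linarith
      exact (hmod _ (hmem k hk.le) _ hu1 hd).le
    have := intervalIntegral.norm_integral_le_of_norm_le_const hb
    rw [Real.norm_eq_abs] at this
    refine this.trans ?_
    rw [hstep k, abs_of_nonneg (by positivity)]
  calc |∑ k ∈ Finset.range n, ((∫ _ in s k..s (k+1), g (s k)) - ∫ u in s k..s (k+1), g u)|
      ≤ ∑ k ∈ Finset.range n, |(∫ _ in s k..s (k+1), g (s k)) - ∫ u in s k..s (k+1), g u| :=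
        Finset.abs_sum_le_sum_abs _ _
    _ ≤ ∑ _k ∈ Finset.range n, (ε / (2 * (t + 1))) * (t / n) := Finset.sum_le_sum hterm
    _ = (ε / (2 * (t + 1))) * t := by
        rw [Finset.sum_const, Finset.card_range, nsmul_eq_mul]; field_simp
    _ < ε := by
        rw [div_mul_eq_mul_div, div_lt_iff₀ (by positivity)]
        nlinarith


lemma map_eq_of_tendsto_ae {Ω : Type*} [MeasurableSpace Ω] (P : Measure Ω)
    [IsProbabilityMeasure P] {X Y : Ω → ℝ} {Xn Yn : ℕ → Ω → ℝ}
    (hXn : ∀ n, Measurable (Xn n)) (hYn : ∀ n, Measurable (Yn n))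
    (hX : ∀ᵐ ω ∂P, Tendsto (fun n => Xn n ω) atTop (𝓝 (X ω)))
    (hY : ∀ᵐ ω ∂P, Tendsto (fun n => Yn n ω) atTop (𝓝 (Y ω)))
    (h : ∀ n, P.map (Xn n) = P.map (Yn n)) : P.map X = P.map Y := by
  have hXm : AEMeasurable X P := aemeasurable_of_tendsto_metrizable_ae _ (fun n => (hXn n).aemeasurable) hX
  have hYm : AEMeasurable Y P := aemeasurable_of_tendsto_metrizable_ae _ (fun n => (hYn n).aemeasurable) hY
  have : IsFiniteMeasure (P.map X) := Measure.isFiniteMeasure_map P X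
  apply ext_of_forall_lintegral_eq_of_IsFiniteMeasure
  intro f
  have hfm : Measurable (fun x : ℝ => ((f x : ℝ≥0) : ℝ≥0∞)) :=
    measurable_coe_nnreal_ennreal.comp f.continuous.measurable
  rw [lintegral_map' hfm.aemeasurable hXm, lintegral_map' hfm.aemeasurable hYm]
  have key : ∀ (Z : Ω → ℝ) (Zn : ℕ → Ω → ℝ), (∀ n, Measurable (Zn n)) →
      (∀ᵐ ω ∂P, Tendsto (fun n => Zn n ω) atTop (𝓝 (Z ω))) →
      Tendsto (fun n => ∫⁻ ω, (f (Zn n ω) : ℝ≥0∞) ∂P) atTop (𝓝 (∫⁻ ω, (f (Z ω) : ℝ≥0∞) ∂P)) := by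
    intro Z Zn hZn hZ
    obtain ⟨C, hC⟩ := f.bounded
    have hbd : ∀ x : ℝ, ((f x : ℝ≥0) : ℝ≥0∞) ≤ ENNReal.ofReal ((f 0 : ℝ≥0) + C) := by
      intro x
      rw [← ENNReal.ofReal_coe_nnreal]
      apply ENNReal.ofReal_le_ofReal
      have := hC x 0
      rw [NNReal.dist_eq] at this
      have h2 := abs_le.1 this
      linarith [h2.1]
    apply tendsto_lintegral_of_dominated_convergence (fun _ => ENNReal.ofReal ((f 0 : ℝ≥0) + C))
    · exact fun n => (measurable_coe_nnreal_ennreal.comp f.continuous.measurable).comp (hZn n)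
    · intro n
      filter_upwards with ω
      exact hbd _
    · simp [lintegral_const, ENNReal.ofReal_ne_top, ENNReal.mul_ne_top]
    · filter_upwards [hZ] with ω hω
      exact (ENNReal.continuous_coe.tendsto _).comp ((f.continuous.tendsto _).comp hω)
  have h1 := key X Xn hXn hX
  have h2 := key Y Yn hYn hY
  have heq : ∀ n, ∫⁻ ω, (f (Xn n ω) : ℝ≥0∞) ∂P = ∫⁻ ω, (f (Yn n ω) : ℝ≥0∞) ∂P := by
    intro n
    rw [← lintegral_map' hfm.aemeasurable (hXn n).aemeasurable,
      ← lintegral_map' hfm.aemeasurable (hYn n).aemeasurable, h n]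
  simp_rw [heq] at h1
  exact tendsto_nhds_unique h1 h2

lemma map_incr_eq_pi {Ω : Type*} [MeasurableSpace Ω] (P : Measure Ω)
    [IsProbabilityMeasure P] {B : ℝ → Ω → ℝ} (hB : IsStandardBrownianMotion P B)
    (t : ℝ) (ht : 0 ≤ t) (n : ℕ) (hn : 1 ≤ n) :
    P.map (fun ω (i : Fin n) => B (t * (i + 1) / n) ω - B (t * i / n) ω) =
      Measure.pi (fun _ : Fin n => gaussianReal 0 (t / n).toNNReal) := by
  have hnpos : (0:ℝ) < n := by exact_mod_cast hn
  set τ : ℕ → ℝ := fun j => t * (min j n) / n with hτdef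
  have hτ : ∀ j : ℕ, j ≤ n → τ j = t * j / n := by
    intro j hj; simp only [hτdef, min_eq_left hj]
  have hτmono : Monotone τ := by
    intro j k hjk
    have hm : ((min j n : ℕ):ℝ) ≤ ((min k n : ℕ):ℝ) := by
      exact_mod_cast min_le_min_right n hjk
    simp only [hτdef]
    gcongr
  have hτ0 : ∀ j, 0 ≤ τ j := fun j => by positivity
  set J : ℕ → Ω → ℝ := fun j ω => B (τ (j + 1)) ω - B (τ j) ω with hJ
  have hJm : ∀ j, Measurable (J j) := fun j => (hB.measurable _).sub (hB.measurable _)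
  have hindep := hB.indep_incr τ hτmono
  have hVm : Measurable (fun ω (i : Fin n) => B (t * (i + 1) / n) ω - B (t * i / n) ω) :=
    measurable_pi_lambda _ fun i => (hB.measurable _).sub (hB.measurable _)
  have hVJ : ∀ (i : Fin n) (ω : Ω), B (t * ((i:ℕ) + 1) / n) ω - B (t * i / n) ω = J i ω := by
    intro i ω
    have h1 := hτ i (le_of_lt i.isLt)
    have h2 := hτ (i + 1) i.isLt
    simp only [hJ, h1, h2]
    push_cast; ring_nf
  refine (Measure.pi_eq fun s hs => ?_).symm
  classical
  set S : ℕ → Set ℝ := fun j => if h : j < n then s ⟨j, h⟩ else univ with hS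
  have hSm : ∀ j, MeasurableSet (S j) := by
    intro j; by_cases h : j < n
    · simpa [hS, h] using hs ⟨j, h⟩
    · simp [hS, h]
  rw [Measure.map_apply hVm (MeasurableSet.univ_pi hs)]
  have hpre : (fun ω (i : Fin n) => B (t * (i + 1) / n) ω - B (t * i / n) ω) ⁻¹' (univ.pi s)
      = ⋂ j ∈ Finset.range n, J j ⁻¹' S j := by
    ext ω
    simp only [mem_preimage, Set.mem_pi, mem_univ, forall_true_left, Set.mem_iInter,
      Finset.mem_range]
    constructor
    · intro h j hj
      have := h ⟨j, hj⟩
      rw [hVJ ⟨j, hj⟩ ω] at this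
      simpa [hS, hj] using this
    · intro h i
      rw [hVJ i ω]
      have := h i i.isLt
      simpa [hS, i.isLt] using this
  rw [hpre, hindep.measure_inter_preimage_eq_mul (Finset.range n) (fun j _ => hSm j)]
  have hmarg : ∀ j < n, P (J j ⁻¹' S j) = gaussianReal 0 (t / n).toNNReal (S j) := by
    intro j hj
    have hstep : τ (j + 1) - τ j = t / n := by
      rw [hτ j hj.le, hτ (j+1) hj]
      push_cast; field_simp; ring
    have := hB.gauss_incr (τ j) (τ (j+1)) (hτ0 j) (hτmono (Nat.le_succ j))
    rw [← Measure.map_apply (hJm j) (hSm j), hJ]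
    rw [this, hstep]
  rw [Finset.prod_congr rfl (fun j hj => hmarg j (Finset.mem_range.1 hj))]
  rw [← Fin.prod_univ_eq_prod_range (fun j => gaussianReal 0 (t / n).toNNReal (S j)) n]
  refine Finset.prod_congr rfl fun i _ => ?_
  simp [hS, i.isLt]


lemma pi_map_rev (n : ℕ) (μ0 : Measure ℝ) [IsProbabilityMeasure μ0] :
    (Measure.pi (fun _ : Fin n => μ0)).map (fun x (i : Fin n) => x i.rev)
      = Measure.pi (fun _ : Fin n => μ0) := by
  have h := Measure.pi_map_piCongrLeft (Fin.revPerm : Equiv.Perm (Fin n))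
    (fun _ : Fin n => μ0)
  have hcoe : ⇑(MeasurableEquiv.piCongrLeft (fun _ : Fin n => ℝ) Fin.revPerm)
      = fun x (i : Fin n) => x i.rev := by
    funext x i
    have := MeasurableEquiv.piCongrLeft_apply_apply
      (Fin.revPerm : Equiv.Perm (Fin n)) (β := fun _ : Fin n => ℝ) x i.rev
    simpa using this
  rw [hcoe] at h
  exact h

lemma per_n {Ω : Type*} [MeasurableSpace Ω] (P : Measure Ω)
    [IsProbabilityMeasure P] {B : ℝ → Ω → ℝ} (hB : IsStandardBrownianMotion P B)
    (ν t : ℝ) (ht : 0 ≤ t) (n : ℕ) (hn : 1 ≤ n) :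
    P.map (fun ω => (t/n) * ∑ k ∈ Finset.range n,
        Real.exp (2 * (B (t*k/n) ω + ν * (t*k/n)))) =
      P.map (fun ω => (t/n) * ∑ k ∈ Finset.range n,
        Real.exp (2 * ((B t ω - B (t - t*k/n) ω) + ν * (t*k/n)))) := by
  classical
  have hnpos : (0:ℝ) < n := by exact_mod_cast hn
  set xe : (Fin n → ℝ) → ℕ → ℝ := fun x i => if h : i < n then x ⟨i, h⟩ else 0 with hxe
  set Φ : (Fin n → ℝ) → ℝ := fun x => (t/n) * ∑ k ∈ Finset.range n,
    Real.exp (2 * ((∑ i ∈ Finset.range k, xe x i) + ν * (t*k/n))) with hΦ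
  have hxem : ∀ i, Measurable (fun x => xe x i) := by
    intro i
    by_cases h : i < n
    · simpa [hxe, h] using measurable_pi_apply (⟨i, h⟩ : Fin n)
    · simpa [hxe, h] using measurable_const
  have hΦm : Measurable Φ := by
    apply Measurable.const_mul
    apply Finset.measurable_sum
    intro k _
    exact (((Finset.measurable_sum (Finset.range k) (fun i _ => hxem i)).add_const
      _).const_mul 2).exp
  set V : Ω → Fin n → ℝ := fun ω i => B (t * ((i:ℕ) + 1) / n) ω - B (t * i / n) ω with hV
  have hVm : Measurable V :=
    measurable_pi_lambda _ fun i => (hB.measurable _).sub (hB.measurable _)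
  have hGm : Measurable (fun x : Fin n → ℝ => fun i : Fin n => x i.rev) :=
    measurable_pi_lambda _ fun i => measurable_pi_apply _
  -- Step 1 : LHS function is a.e. Φ ∘ V
  have step1 : (fun ω => (t/n) * ∑ k ∈ Finset.range n,
      Real.exp (2 * (B (t*k/n) ω + ν * (t*k/n)))) =ᵐ[P] Φ ∘ V := by
    filter_upwards [hB.init] with ω h0
    simp only [Function.comp_apply, hΦ]
    congr 1
    refine Finset.sum_congr rfl fun k hk => ?_
    rw [Finset.mem_range] at hk
    congr 2
    have hsum : ∀ i ∈ Finset.range k, xe (V ω) i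
        = B (t * (i+1:ℕ) / n) ω - B (t * i / n) ω := by
      intro i hi
      rw [Finset.mem_range] at hi
      have hin : i < n := lt_of_lt_of_le hi hk.le
      simp only [hxe, hV, dif_pos hin]
      push_cast; ring_nf
    rw [Finset.sum_congr rfl hsum, Finset.sum_range_sub (fun j => B (t * j / n) ω) k]
    simp [h0]
  -- Step 2 : RHS function is exactly Φ ∘ (reversal ∘ V)
  have step2 : (fun ω => (t/n) * ∑ k ∈ Finset.range n,
      Real.exp (2 * ((B t ω - B (t - t*k/n) ω) + ν * (t*k/n))))
      = Φ ∘ (fun ω => fun i : Fin n => V ω i.rev) := by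
    funext ω
    simp only [Function.comp_apply, hΦ]
    congr 1
    refine Finset.sum_congr rfl fun k hk => ?_
    rw [Finset.mem_range] at hk
    congr 2
    have key : ∀ m : ℕ, m ≤ n → ∑ i ∈ Finset.range m, xe (fun i : Fin n => V ω i.rev) i
        = B (t * n / n) ω - B (t * (n - m : ℕ) / n) ω := by
      intro m
      induction m with
      | zero => intro _; simp
      | succ m ih =>
        intro hm
        rw [Finset.sum_range_succ, ih (Nat.le_of_succ_le hm)]
        have hmn : m < n := hm
        simp only [hxe, dif_pos hmn, hV]
        have h1 : ((Fin.rev ⟨m, hmn⟩ : Fin n) : ℕ) = n - 1 - m := by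
          simp [Fin.rev]; omega
        rw [h1]
        have h2 : ((n - 1 - m : ℕ) : ℝ) + 1 = ((n - m : ℕ) : ℝ) := by
          have e : n - 1 - m + 1 = n - m := by omega
          exact_mod_cast congrArg (Nat.cast (R := ℝ)) e
        have h3 : (n - 1 - m : ℕ) = n - (m + 1) := by omega
        rw [h2, h3]
        ring
    have hk' : ((n - k : ℕ) : ℝ) = (n : ℝ) - k := by
      have : k ≤ n := hk.le
      push_cast [Nat.cast_sub this]; ring
    rw [key k hk.le, hk']
    have e1 : t * (n:ℝ) / n = t := by field_simp
    have e2 : t * ((n:ℝ) - k) / n = t - t * k / n := by field_simp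
    rw [e1, e2]
  -- Step 3 : combine
  rw [Measure.map_congr step1, step2]
  have hc1 : Φ ∘ V = fun ω => Φ (V ω) := rfl
  have hc2 : Φ ∘ (fun ω => fun i : Fin n => V ω i.rev)
      = fun ω => Φ (fun i : Fin n => V ω i.rev) := rfl
  rw [hc1, hc2]
  have m1 : P.map (fun ω => Φ (V ω)) = (P.map V).map Φ :=
    (Measure.map_map hΦm hVm).symm
  have m2 : P.map (fun ω => Φ (fun i : Fin n => V ω i.rev))
      = ((P.map V).map (fun x (i : Fin n) => x i.rev)).map Φ := by
    rw [Measure.map_map hGm hVm, Measure.map_map hΦm (hGm.comp hVm)]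
    rfl
  rw [m1, m2, map_incr_eq_pi P hB t ht n hn, pi_map_rev]

end YorAux

/-- For every `ν ∈ ℝ` and `t ≥ 0`, Yor's process
`A^{(ν)}_t = ∫_0^t exp(2 B^{(ν)}_u) du` has the same distribution as
`exp(2 B^{(ν)}_t) ∫_0^t exp(−2 B^{(ν)}_s) ds` (i.e. `X^{(ν)}_t` started at `0`). -/
theorem yorA_eqDist_gbmAffine
    {Ω : Type*} [MeasurableSpace Ω] (P : Measure Ω) [IsProbabilityMeasure P]
    (B : ℝ → Ω → ℝ) (hB : IsStandardBrownianMotion P B) (ν t : ℝ) (ht : 0 ≤ t) :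
    P.map (fun ω => ∫ u in (0:ℝ)..t, Real.exp (2 * (B u ω + ν * u))) =
      P.map (fun ω => Real.exp (2 * (B t ω + ν * t)) *
        ∫ s in (0:ℝ)..t, Real.exp (-(2 * (B s ω + ν * s)))) := by
  classical
  set Xn : ℕ → Ω → ℝ := fun n ω => (t/n) * ∑ k ∈ Finset.range n,
    Real.exp (2 * (B (t*k/n) ω + ν * (t*k/n))) with hXn
  set Yn : ℕ → Ω → ℝ := fun n ω => (t/n) * ∑ k ∈ Finset.range n,
    Real.exp (2 * ((B t ω - B (t - t*k/n) ω) + ν * (t*k/n))) with hYn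
  apply map_eq_of_tendsto_ae P (Xn := Xn) (Yn := Yn)
  · intro n
    exact (Finset.measurable_sum _ fun k _ =>
      (((hB.measurable _).add_const _).const_mul 2).exp).const_mul _
  · intro n
    exact (Finset.measurable_sum _ fun k _ =>
      ((((hB.measurable t).sub (hB.measurable _)).add_const _).const_mul 2).exp).const_mul _
  · filter_upwards [hB.cont] with ω hω
    have hg : Continuous (fun u : ℝ => Real.exp (2 * (B u ω + ν * u))) :=
      Real.continuous_exp.comp (continuous_const.mul (hω.add (continuous_const.mul continuous_id)))
    exact leftSum_tendsto _ hg t ht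
  · filter_upwards [hB.cont] with ω hω
    have hg : Continuous (fun s : ℝ => Real.exp (2 * ((B t ω - B (t - s) ω) + ν * s))) := by
      apply Real.continuous_exp.comp
      exact continuous_const.mul ((continuous_const.sub
        (hω.comp (continuous_const.sub continuous_id))).add
        (continuous_const.mul continuous_id))
    have h1 := leftSum_tendsto _ hg t ht
    have key : (∫ u in (0:ℝ)..t, Real.exp (2 * ((B t ω - B (t - u) ω) + ν * u)))
        = Real.exp (2 * (B t ω + ν * t)) *
          ∫ s in (0:ℝ)..t, Real.exp (-(2 * (B s ω + ν * s))) := by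
      rw [← intervalIntegral.integral_const_mul]
      have e1 : (∫ u in (0:ℝ)..t, Real.exp (2 * ((B t ω - B (t - u) ω) + ν * u)))
          = ∫ u in (0:ℝ)..t, (fun s => Real.exp (2 * ((B t ω - B s ω) + ν * (t - s)))) (t - u) := by
        apply intervalIntegral.integral_congr
        intro u _
        simp only
        congr 1
        ring
      rw [e1, intervalIntegral.integral_comp_sub_left
        (fun s => Real.exp (2 * ((B t ω - B s ω) + ν * (t - s)))) t]
      simp only [sub_self, sub_zero]
      apply intervalIntegral.integral_congr
      intro s _
      simp only
      rw [← Real.exp_add]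
      congr 1
      ring
    rw [← key]
    exact h1
  · intro n
    rcases Nat.eq_zero_or_pos n with h0 | hpos
    · subst h0
      have : Xn 0 = Yn 0 := by funext ω; simp [hXn, hYn]
      rw [this]
    · exact per_n P hB ν t ht n hpos
end

section
/- For every ν ∈ ℝ and every x > 0, the hitting times τ^{(−ν)}_{x,0} and H^{(ν)}_x have the same distribution; equivalently, inf{t ≥ 0 : ∫_0^t exp(−2 B_s + 2νs) ds = x} has the same law as inf{t ≥ 0 : ∫_0^t exp(2 B_s + 2νs) ds = x}. -/
open MeasureTheory ProbabilityTheory Real Filter Set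
open scoped ENNReal NNReal

section BMAux

open scoped Topology


lemma riemann_tendsto {h : ℝ → ℝ} (hc : Continuous h) {q : ℝ} (hq : 0 ≤ q) :
    Tendsto (fun n : ℕ => ∑ k ∈ Finset.range n, (q / n) * h (k * q / n)) atTop
      (𝓝 (∫ u in (0:ℝ)..q, h u)) := by
  rcases eq_or_lt_of_le hq with rfl | hq
  · simpa using tendsto_const_nhds
  rw [Metric.tendsto_atTop]
  intro ε hε
  have hε' : 0 < ε / (q + 1) := by positivity
  have huc : UniformContinuousOn h (Icc 0 q) :=
    (isCompact_Icc).uniformContinuousOn_of_continuous hc.continuousOn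
  obtain ⟨δ, hδ, hδ'⟩ := (Metric.uniformContinuousOn_iff ..).mp huc (ε / (q + 1)) hε'
  obtain ⟨N, hN⟩ := exists_nat_gt (q / δ)
  refine ⟨N + 1, fun n hn => ?_⟩
  have hn0 : 0 < n := lt_of_lt_of_le (Nat.succ_pos N) hn
  have hn0' : (0:ℝ) < n := by exact_mod_cast hn0
  set a : ℕ → ℝ := fun k => k * q / n with ha
  have hmesh : q / n < δ := by
    rw [div_lt_iff₀ hn0']
    have h1 : q / δ < n := lt_of_lt_of_le hN (by exact_mod_cast le_trans (Nat.le_succ N) hn)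
    calc q = (q / δ) * δ := by field_simp
    _ < n * δ := by exact mul_lt_mul_of_pos_right h1 hδ
    _ = δ * n := by ring
  have hak : ∀ k : ℕ, k ≤ n → a k ∈ Icc (0:ℝ) q := by
    intro k hk
    constructor
    · positivity
    · rw [div_le_iff₀ hn0']
      have : (k:ℝ) ≤ n := by exact_mod_cast hk
      calc (k:ℝ) * q ≤ n * q := by nlinarith
      _ = q * n := by ring
  have hint : ∀ k, k < n → IntervalIntegrable h volume (a k) (a (k+1)) :=
    fun k _ => hc.intervalIntegrable _ _
  have hsum : ∑ k ∈ Finset.range n, ∫ u in a k..a (k+1), h u = ∫ u in (0:ℝ)..q, h u := by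
    rw [intervalIntegral.sum_integral_adjacent_intervals hint]
    have h0 : a 0 = 0 := by simp [ha]
    have hq' : a n = q := by simp only [ha]; exact mul_div_cancel_left₀ q hn0'.ne'
    rw [h0, hq']
  have hstep : ∀ k : ℕ, a (k+1) - a k = q / n := by
    intro k; simp only [ha]; push_cast; ring
  have hbound : ∀ k, k < n →
      |(q / n) * h (a k) - ∫ u in a k..a (k+1), h u| ≤ (ε / (q+1)) * (q / n) := by
    intro k hk
    have hle : a k ≤ a (k+1) := by
      have h2 : 0 ≤ a (k+1) - a k := by rw [hstep k]; positivity
      linarith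
    have heq : (q / n) * h (a k) - (∫ u in a k..a (k+1), h u)
        = ∫ u in a k..a (k+1), (h (a k) - h u) := by
      rw [intervalIntegral.integral_sub (intervalIntegrable_const) (hc.intervalIntegrable _ _),
        intervalIntegral.integral_const, hstep k, smul_eq_mul]
    rw [heq]
    have hC : ∀ u ∈ Set.uIoc (a k) (a (k+1)), ‖h (a k) - h u‖ ≤ ε / (q+1) := by
      intro u hu
      rw [Set.uIoc_of_le hle] at hu
      have hu1 : u ∈ Icc (0:ℝ) q := by
        constructor
        · exact le_trans (hak k (le_of_lt hk)).1 (le_of_lt hu.1)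
        · exact le_trans hu.2 (hak (k+1) hk).2
      have hdist : dist (a k) u < δ := by
        rw [Real.dist_eq, abs_sub_comm, abs_of_nonneg (by linarith [hu.1.le])]
        have : u - a k ≤ a (k+1) - a k := by linarith [hu.2]
        rw [hstep k] at this
        linarith
      have := hδ' (a k) (hak k (le_of_lt hk)) u hu1 hdist
      rw [Real.dist_eq] at this
      exact le_of_lt this
    have := intervalIntegral.norm_integral_le_of_norm_le_const hC
    rw [Real.norm_eq_abs] at this
    rw [abs_of_nonneg (by rw [hstep k]; positivity : (0:ℝ) ≤ a (k+1) - a k), hstep k] at this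
    exact this
  rw [Real.dist_eq]
  have : |(∑ k ∈ Finset.range n, (q / n) * h (a k)) - ∫ u in (0:ℝ)..q, h u|
      ≤ (ε / (q+1)) * q := by
    rw [← hsum, ← Finset.sum_sub_distrib]
    calc |∑ k ∈ Finset.range n, ((q / n) * h (a k) - ∫ u in a k..a (k+1), h u)|
        ≤ ∑ k ∈ Finset.range n, |(q / n) * h (a k) - ∫ u in a k..a (k+1), h u| :=
          Finset.abs_sum_le_sum_abs _ _
      _ ≤ ∑ _k ∈ Finset.range n, (ε / (q+1)) * (q / n) :=
          Finset.sum_le_sum (fun i hi => hbound i (Finset.mem_range.mp hi))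
      _ = n * ((ε / (q+1)) * (q / n)) := by rw [Finset.sum_const, Finset.card_range]; ring
      _ = (ε / (q+1)) * q := by field_simp
  calc |(∑ k ∈ Finset.range n, (q / n) * h ((k:ℝ) * q / n)) - ∫ u in (0:ℝ)..q, h u|
      ≤ (ε / (q+1)) * q := this
    _ < ε := by rw [div_mul_eq_mul_div, div_lt_iff₀ (by linarith)]; nlinarith

abbrev QNN := {r : ℚ // 0 ≤ r}


lemma hitTime_eq_rat_inf {F : ℝ → ℝ} (hFc : Continuous F) (hF0 : F 0 = 0)
    (hmono : StrictMonoOn F (Ici 0)) {x : ℝ} (hx : 0 < x) :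
    (⨅ (t : ℝ) (_ : 0 ≤ t ∧ F t = x), ENNReal.ofReal t)
      = ⨅ (q : QNN) (_ : x ≤ F (q.1 : ℝ)), ENNReal.ofReal (q.1 : ℝ) := by
  by_cases hex : ∃ t, 0 ≤ t ∧ F t = x
  · obtain ⟨t₀, ht0, htx⟩ := hex
    have hLHS : (⨅ (t : ℝ) (_ : 0 ≤ t ∧ F t = x), ENNReal.ofReal t) = ENNReal.ofReal t₀ := by
      apply le_antisymm
      · exact iInf₂_le t₀ ⟨ht0, htx⟩
      · refine le_iInf₂ fun t ht => ?_
        have : t = t₀ := hmono.injOn ht.1 ht0 (ht.2.trans htx.symm)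
        rw [this]
    rw [hLHS]
    apply le_antisymm
    · -- ofReal t₀ ≤ iInf
      refine le_iInf₂ fun q hq => ?_
      have hq0 : (0:ℝ) ≤ (q.1 : ℝ) := by exact_mod_cast q.2
      have : t₀ ≤ (q.1:ℝ) := by
        by_contra hcon
        push_neg at hcon
        have := hmono hq0 ht0 hcon
        rw [htx] at this
        linarith
      exact ENNReal.ofReal_le_ofReal this
    · refine ENNReal.le_of_forall_pos_le_add fun ε hε _ => ?_
      obtain ⟨r, hr1, hr2⟩ := exists_rat_btwn (show t₀ < t₀ + (ε:ℝ) by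
        have : (0:ℝ) < ε := hε
        linarith)
      have hr0 : (0:ℚ) ≤ r := by
        have : (0:ℝ) ≤ (r:ℝ) := le_trans ht0 hr1.le
        exact_mod_cast this
      have hxr : x ≤ F (r : ℝ) := by
        rw [← htx]
        exact (hmono ht0 (le_trans ht0 hr1.le) hr1).le
      calc (⨅ (q : QNN) (_ : x ≤ F (q.1 : ℝ)), ENNReal.ofReal (q.1 : ℝ))
          ≤ ENNReal.ofReal (r:ℝ) := iInf₂_le (⟨r, hr0⟩ : QNN) hxr
        _ ≤ ENNReal.ofReal (t₀ + (ε:ℝ)) := ENNReal.ofReal_le_ofReal hr2.le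
        _ ≤ ENNReal.ofReal t₀ + ε := by
            rw [ENNReal.ofReal_add ht0 (by positivity)]
            simp [ENNReal.ofReal_coe_nnreal]
  · push_neg at hex
    have h1 : (⨅ (t : ℝ) (_ : 0 ≤ t ∧ F t = x), ENNReal.ofReal t) = ⊤ := by
      rw [iInf_eq_top]
      intro t
      rw [iInf_eq_top]
      intro ht
      exact absurd ht.2 (hex t ht.1 |> fun h => h)
    have h2 : ∀ t, 0 ≤ t → F t < x := by
      intro t ht
      rcases lt_or_ge (F t) x with h | h
      · exact h
      · exfalso
        have : x ∈ Icc (F 0) (F t) := ⟨by rw [hF0]; exact hx.le, h⟩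
        obtain ⟨u, hu, huF⟩ := intermediate_value_Icc ht hFc.continuousOn this
        exact (hex u hu.1) huF
    rw [h1]
    symm
    rw [iInf_eq_top]
    intro q
    rw [iInf_eq_top]
    intro hq
    exact absurd hq (not_le.mpr (h2 _ (by exact_mod_cast q.2)))


noncomputable def nodeQ (q : QNN) (n k : ℕ) : QNN :=
  ⟨(k : ℚ) * q.1 / n, by have hq := q.2; positivity⟩

noncomputable def rsum (ν : ℝ) (q : QNN) (n : ℕ) (g : QNN → ℝ) : ℝ :=
  ∑ k ∈ Finset.range n,
    ((q.1 : ℝ) / n) * Real.exp (2 * g (nodeQ q n k) + 2 * ν * ((nodeQ q n k).1 : ℝ))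

noncomputable def Jfun (ν : ℝ) (q : QNN) (g : QNN → ℝ) : ℝ≥0∞ :=
  liminf (fun n => ENNReal.ofReal (rsum ν q n g)) atTop

noncomputable def Gfun (ν x : ℝ) (g : QNN → ℝ) : ℝ≥0∞ :=
  ⨅ (q : QNN) (_ : ENNReal.ofReal x ≤ Jfun ν q g), ENNReal.ofReal (q.1 : ℝ)

lemma measurable_rsum (ν : ℝ) (q : QNN) (n : ℕ) : Measurable (rsum ν q n) := by
  apply Finset.measurable_sum
  intro k _
  apply Measurable.const_mul
  exact (((measurable_pi_apply (nodeQ q n k)).const_mul 2).add_const _).exp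

lemma measurable_Jfun (ν : ℝ) (q : QNN) : Measurable (Jfun ν q) :=
  Measurable.liminf fun n => ENNReal.measurable_ofReal.comp (measurable_rsum ν q n)

lemma measurable_Gfun (ν x : ℝ) : Measurable (Gfun ν x) := by
  have : Gfun ν x = fun g => ⨅ (q : QNN),
      (if ENNReal.ofReal x ≤ Jfun ν q g then ENNReal.ofReal (q.1 : ℝ) else ⊤) := by
    funext g
    unfold Gfun
    congr 1
    funext q
    split_ifs with h
    · rw [iInf_pos h]
    · rw [iInf_neg h]
  rw [this]
  apply Measurable.iInf
  intro q
  apply Measurable.ite _ measurable_const measurable_const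
  exact (measurable_Jfun ν q) measurableSet_Ici


lemma Gfun_eval (ν x : ℝ) (hx : 0 < x) {b : ℝ → ℝ} (hb : Continuous b) :
    Gfun ν x (fun p => b (p.1 : ℝ))
      = ⨅ (t : ℝ) (_ : 0 ≤ t ∧ (∫ u in (0:ℝ)..t, Real.exp (2 * b u + 2 * ν * u)) = x),
          ENNReal.ofReal t := by
  set h : ℝ → ℝ := fun u => Real.exp (2 * b u + 2 * ν * u) with hh
  have hhc : Continuous h := by
    apply Real.continuous_exp.comp
    fun_prop
  set F : ℝ → ℝ := fun t => ∫ u in (0:ℝ)..t, h u with hF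
  have hFc : Continuous F :=
    intervalIntegral.continuous_primitive (fun a b => hhc.intervalIntegrable a b) 0
  have hF0 : F 0 = 0 := by simp [hF]
  have hmono : StrictMonoOn F (Ici 0) := by
    intro a ha c hc hac
    have hdiff : F c - F a = ∫ u in a..c, h u := by
      have hadd := intervalIntegral.integral_add_adjacent_intervals
        (μ := volume) (hhc.intervalIntegrable 0 a) (hhc.intervalIntegrable a c)
      simp only [hF]
      linarith
    have hpos : 0 < ∫ u in a..c, h u :=
      intervalIntegral.intervalIntegral_pos_of_pos (hhc.intervalIntegrable a c)
        (fun u => Real.exp_pos _) hac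
    linarith [hdiff ▸ hpos]
  -- each J equals ofReal (F q)
  have hJ : ∀ q : QNN, Jfun ν q (fun p => b (p.1 : ℝ)) = ENNReal.ofReal (F (q.1 : ℝ)) := by
    intro q
    have hq0 : (0:ℝ) ≤ (q.1 : ℝ) := by exact_mod_cast q.2
    have hR : Tendsto (fun n : ℕ => rsum ν q n (fun p => b (p.1 : ℝ))) atTop (𝓝 (F (q.1:ℝ))) := by
      have := riemann_tendsto hhc hq0
      refine this.congr fun n => ?_
      apply Finset.sum_congr rfl
      intro k _
      have hcast : (((nodeQ q n k).1 : ℚ) : ℝ) = (k : ℝ) * (q.1 : ℝ) / (n : ℝ) := by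
        simp only [nodeQ]
        push_cast
        ring
      simp only [hh, hcast]
    have : Tendsto (fun n : ℕ => ENNReal.ofReal (rsum ν q n (fun p => b (p.1 : ℝ)))) atTop
        (𝓝 (ENNReal.ofReal (F (q.1:ℝ)))) :=
      (ENNReal.continuous_ofReal.tendsto _).comp hR
    exact this.liminf_eq
  have hcond : ∀ q : QNN, (ENNReal.ofReal x ≤ Jfun ν q (fun p => b (p.1 : ℝ)))
      ↔ (x ≤ F (q.1 : ℝ)) := by
    intro q
    rw [hJ q]
    have hq0 : (0:ℝ) ≤ (q.1 : ℝ) := by exact_mod_cast q.2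
    have hFnn : 0 ≤ F (q.1 : ℝ) :=
      intervalIntegral.integral_nonneg hq0 (fun u _ => (Real.exp_pos _).le)
    exact ENNReal.ofReal_le_ofReal_iff hFnn
  rw [hitTime_eq_rat_inf hFc hF0 hmono hx]
  unfold Gfun
  exact iInf_congr fun q => by rw [hcond q]


variable {Ω : Type*} [MeasurableSpace Ω] {P : Measure Ω} [IsProbabilityMeasure P]

lemma map_pi_of_iIndep (Z : ℕ → Ω → ℝ) (hmeas : ∀ i, Measurable (Z i))
    (hi : iIndepFun Z P) (n : ℕ) :
    P.map (fun ω (k : Fin n) => Z k ω) = Measure.pi (fun k : Fin n => P.map (Z (k : ℕ))) := by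
  haveI : ∀ k : Fin n, IsProbabilityMeasure (P.map (Z (k:ℕ))) :=
    fun k => Measure.isProbabilityMeasure_map (hmeas _).aemeasurable
  haveI : ∀ k : Fin n, SigmaFinite (P.map (Z (k:ℕ))) := fun k => inferInstance
  symm
  apply Measure.pi_eq
  intro A hA
  have hDmeas : Measurable (fun ω (k : Fin n) => Z k ω) :=
    measurable_pi_lambda _ fun k => hmeas _
  rw [Measure.map_apply hDmeas (MeasurableSet.univ_pi hA)]
  classical
  set sets : ℕ → Set ℝ := fun i => if h : i < n then A ⟨i, h⟩ else univ with hsets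
  have hsets_meas : ∀ i ∈ Finset.range n, MeasurableSet (sets i) := by
    intro i hi2
    rw [Finset.mem_range] at hi2
    simp only [hsets, dif_pos hi2]
    exact hA _
  have hpre : (fun ω (k : Fin n) => Z k ω) ⁻¹' (univ.pi A)
      = ⋂ i ∈ Finset.range n, Z i ⁻¹' sets i := by
    ext ω
    simp only [mem_preimage, Set.mem_pi, mem_univ, forall_true_left, Finset.mem_range, mem_iInter]
    constructor
    · intro hmem i hi2
      simp only [hsets, dif_pos hi2, mem_preimage]
      exact hmem ⟨i, hi2⟩
    · intro hmem k
      have := hmem k k.isLt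
      simpa only [hsets, dif_pos k.isLt, mem_preimage, Fin.eta] using this
  rw [hpre, hi.measure_inter_preimage_eq_mul _ hsets_meas,
    ← Fin.prod_univ_eq_prod_range (fun i => P (Z i ⁻¹' sets i)) n]
  apply Finset.prod_congr rfl
  intro k _
  rw [Measure.map_apply (hmeas _) (hA k)]
  congr 1
  simp only [hsets, dif_pos k.isLt, Fin.eta]

lemma findim {Ω : Type*} [MeasurableSpace Ω] {P : Measure Ω} [IsProbabilityMeasure P]
    {B : ℝ → Ω → ℝ} (hB : IsStandardBrownianMotion P B) (s : Finset QNN) :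
    P.map (fun ω (j : s) => B ((j : QNN).1 : ℝ) ω)
      = P.map (fun ω (j : s) => -B ((j : QNN).1 : ℝ) ω) := by
  classical
  set n := s.card with hn
  set e : Fin n ≃o s := s.orderIsoOfFin rfl with he
  set q : Fin n → ℝ := fun k => (((e k : QNN)).1 : ℝ) with hq
  have hq0 : ∀ k, 0 ≤ q k := by
    intro k
    have h2 : (0:ℚ) ≤ ((e k : QNN)).1 := (e k : QNN).2
    simp only [hq]
    exact_mod_cast h2
  have hqmono : Monotone q := by
    intro k l hkl
    have h1 : e k ≤ e l := e.monotone hkl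
    have h2 : ((e k : QNN)).1 ≤ ((e l : QNN)).1 := h1
    simp only [hq]
    exact_mod_cast h2
  set t : ℕ → ℝ := fun i =>
    if h : 0 < i ∧ i ≤ n then q ⟨i - 1, by omega⟩
    else if h' : 0 < n ∧ n < i then q ⟨n - 1, by omega⟩ else 0 with ht
  have ht0 : t 0 = 0 := by simp [ht]
  have htnn : ∀ i, 0 ≤ t i := by
    intro i
    simp only [ht]
    split_ifs <;> first | exact hq0 _ | exact le_refl 0
  have htq : ∀ k : Fin n, t ((k : ℕ) + 1) = q k := by
    intro k
    have hk : 0 < (k:ℕ) + 1 ∧ (k:ℕ) + 1 ≤ n := ⟨Nat.succ_pos _, k.isLt⟩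
    simp only [ht, dif_pos hk]
    exact congrArg q (Fin.ext (by show (k:ℕ) + 1 - 1 = (k:ℕ); omega))
  have htmono : Monotone t := by
    apply monotone_nat_of_le_succ
    intro i
    rcases Nat.eq_zero_or_pos i with rfl | hi
    · rw [ht0]; exact htnn 1
    by_cases h1 : i + 1 ≤ n
    · have hii : 0 < i ∧ i ≤ n := ⟨hi, by omega⟩
      have hii1 : 0 < i + 1 ∧ i + 1 ≤ n := ⟨by omega, h1⟩
      simp only [ht, dif_pos hii, dif_pos hii1]
      exact hqmono (Fin.mk_le_mk.mpr (by omega))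
    · -- i + 1 > n
      have hni : n < i + 1 := by omega
      by_cases h2 : i ≤ n
      · -- i = n (since i ≥ 1, i ≤ n < i+1)
        have hii : 0 < i ∧ i ≤ n := ⟨hi, h2⟩
        have hn0 : 0 < n := by omega
        simp only [ht, dif_neg (by omega : ¬(0 < i + 1 ∧ i + 1 ≤ n)),
          dif_pos hii, dif_pos (⟨hn0, hni⟩ : 0 < n ∧ n < i + 1)]
        exact le_of_eq (congrArg q (Fin.ext (by show i - 1 = n - 1; omega)))
      · by_cases hn0 : 0 < n
        · simp only [ht, dif_neg (by omega : ¬(0 < i ∧ i ≤ n)),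
            dif_neg (by omega : ¬(0 < i + 1 ∧ i + 1 ≤ n)),
            dif_pos (⟨hn0, by omega⟩ : 0 < n ∧ n < i),
            dif_pos (⟨hn0, by omega⟩ : 0 < n ∧ n < i + 1)]
          exact le_refl _
        · simp only [ht, dif_neg (by omega : ¬(0 < i ∧ i ≤ n)),
            dif_neg (by omega : ¬(0 < i + 1 ∧ i + 1 ≤ n)),
            dif_neg (by omega : ¬(0 < n ∧ n < i)),
            dif_neg (by omega : ¬(0 < n ∧ n < i + 1))]
          exact le_refl _
  -- increments
  set Δ : ℕ → Ω → ℝ := fun i ω => B (t (i + 1)) ω - B (t i) ω with hΔ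
  have hΔmeas : ∀ i, Measurable (Δ i) := fun i => (hB.measurable _).sub (hB.measurable _)
  have hindep : iIndepFun Δ P := hB.indep_incr t htmono
  have hindep' : iIndepFun (fun i ω => -Δ i ω) P := by
    have h := hindep.comp (fun _ => fun y : ℝ => -y) (fun _ => measurable_neg)
    exact h
  have hsymm : ∀ i, P.map (fun ω => -Δ i ω) = P.map (Δ i) := by
    intro i
    have h1 : P.map (fun ω => -Δ i ω) = (P.map (Δ i)).map (fun y : ℝ => -y) := by
      rw [Measure.map_map measurable_neg (hΔmeas i)]
      rfl
    have hg := hB.gauss_incr (t i) (t (i+1)) (htnn i) (htmono (Nat.le_succ i))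
    have h2 : (fun y : ℝ => -y) = (fun y : ℝ => (-1 : ℝ) * y) := by funext y; ring
    have hv : (NNReal.mk ((-1:ℝ)^2) (sq_nonneg _) : ℝ≥0) = 1 := by
      ext
      norm_num
    rw [h1, hg, h2, gaussianReal_map_const_mul, hv, one_mul, neg_one_mul, neg_zero, ← hg]
  set D : Ω → (Fin n → ℝ) := fun ω k => Δ k ω with hD
  set D' : Ω → (Fin n → ℝ) := fun ω k => -Δ k ω with hD'
  have hDmeas : Measurable D := measurable_pi_lambda _ fun k => hΔmeas _
  have hD'meas : Measurable D' := measurable_pi_lambda _ fun k => (hΔmeas _).neg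
  have hlaw : P.map D = P.map D' := by
    rw [hD, hD', map_pi_of_iIndep Δ hΔmeas hindep n,
        map_pi_of_iIndep (fun i ω => -Δ i ω) (fun i => (hΔmeas i).neg) hindep' n]
    exact congrArg Measure.pi (funext fun k => (hsymm (k:ℕ)).symm)
  set L : (Fin n → ℝ) → (s → ℝ) :=
    fun d j => ∑ k : Fin n, if (k : ℕ) < (e.symm j : ℕ) + 1 then d k else 0 with hL
  have hLmeas : Measurable L := by
    apply measurable_pi_lambda
    intro j
    apply Finset.measurable_sum
    intro k _
    by_cases hc : (k : ℕ) < (e.symm j : ℕ) + 1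
    · simpa [hc] using measurable_pi_apply k
    · simp only [hc, if_false]
      exact measurable_const
  have hrepr : ∀ ω, B 0 ω = 0 → ∀ j : s, L (D ω) j = B (((j : QNN)).1 : ℝ) ω := by
    intro ω hω j
    set m : ℕ := (e.symm j : ℕ) + 1 with hm
    have hmn : m ≤ n := (e.symm j).isLt
    have h1 : L (D ω) j = ∑ i ∈ Finset.range n, (if i < m then Δ i ω else 0) :=
      Fin.sum_univ_eq_sum_range (fun i => if i < m then Δ i ω else 0) n
    have h2 : ∑ i ∈ Finset.range n, (if i < m then Δ i ω else 0)
        = ∑ i ∈ Finset.range m, Δ i ω := by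
      rw [← Finset.sum_subset (Finset.range_subset_range.mpr hmn)
        (fun i _ hi => if_neg (by rw [Finset.mem_range] at hi; omega))]
      exact Finset.sum_congr rfl fun i hi => if_pos (Finset.mem_range.mp hi)
    have h3 : ∑ i ∈ Finset.range m, Δ i ω = B (t m) ω - B (t 0) ω :=
      Finset.sum_range_sub (fun i => B (t i) ω) m
    have h4 : t m = (((j : QNN)).1 : ℝ) := by
      rw [hm, htq (e.symm j)]
      simp only [hq]
      rw [OrderIso.apply_symm_apply]
    rw [h1, h2, h3, h4, ht0, hω, sub_zero]
  have hLneg : ∀ (d : Fin n → ℝ) (j : s), L (-d) j = -(L d j) := by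
    intro d j
    simp only [hL, Pi.neg_apply, ← Finset.sum_neg_distrib]
    exact Finset.sum_congr rfl fun k _ => by split_ifs <;> simp
  have hVae : (fun ω (j : s) => B (((j : QNN)).1 : ℝ) ω) =ᵐ[P] (L ∘ D) := by
    filter_upwards [hB.init] with ω hω
    funext j
    exact (hrepr ω hω j).symm
  have hV'ae : (fun ω (j : s) => -B (((j : QNN)).1 : ℝ) ω) =ᵐ[P] (L ∘ D') := by
    filter_upwards [hB.init] with ω hω
    funext j
    have hneg : L (D' ω) j = -(L (D ω) j) := by
      rw [show D' ω = -(D ω) from rfl, hLneg]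
    rw [Function.comp_apply, hneg, hrepr ω hω j]
  rw [Measure.map_congr hVae, Measure.map_congr hV'ae,
      ← Measure.map_map hLmeas hDmeas, ← Measure.map_map hLmeas hD'meas, hlaw]


lemma pathlaw {Ω : Type*} [MeasurableSpace Ω] {P : Measure Ω} [IsProbabilityMeasure P]
    {B : ℝ → Ω → ℝ} (hB : IsStandardBrownianMotion P B) :
    P.map (fun ω (p : QNN) => B (p.1 : ℝ) ω) = P.map (fun ω (p : QNN) => -B (p.1 : ℝ) ω) := by
  have hιm : Measurable (fun ω (p : QNN) => B (p.1 : ℝ) ω) :=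
    measurable_pi_lambda _ fun p => hB.measurable _
  have hι'm : Measurable (fun ω (p : QNN) => -B (p.1 : ℝ) ω) :=
    measurable_pi_lambda _ fun p => (hB.measurable _).neg
  haveI h1 : IsProbabilityMeasure (P.map (fun ω (p : QNN) => B (p.1 : ℝ) ω)) :=
    Measure.isProbabilityMeasure_map hιm.aemeasurable
  haveI h2 : IsProbabilityMeasure (P.map (fun ω (p : QNN) => -B (p.1 : ℝ) ω)) :=
    Measure.isProbabilityMeasure_map hι'm.aemeasurable
  apply ext_of_generate_finite (measurableCylinders (fun _ : QNN => ℝ))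
    generateFrom_measurableCylinders.symm isPiSystem_measurableCylinders
  · intro C hC
    have hCm : MeasurableSet C := MeasurableSet.of_mem_measurableCylinders hC
    obtain ⟨s, S, hS, rfl⟩ := (mem_measurableCylinders C).mp hC
    rw [Measure.map_apply hιm hCm, Measure.map_apply hι'm hCm]
    have e1 : (fun ω (p : QNN) => B (p.1 : ℝ) ω) ⁻¹' cylinder s S
        = (fun ω (j : s) => B ((j : QNN).1 : ℝ) ω) ⁻¹' S := rfl
    have e2 : (fun ω (p : QNN) => -B (p.1 : ℝ) ω) ⁻¹' cylinder s S
        = (fun ω (j : s) => -B ((j : QNN).1 : ℝ) ω) ⁻¹' S := rfl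
    have hVm : Measurable (fun ω (j : s) => B ((j : QNN).1 : ℝ) ω) :=
      measurable_pi_lambda _ fun j => hB.measurable _
    have hV'm : Measurable (fun ω (j : s) => -B ((j : QNN).1 : ℝ) ω) :=
      measurable_pi_lambda _ fun j => (hB.measurable _).neg
    rw [e1, e2, ← Measure.map_apply hVm hS, ← Measure.map_apply hV'm hS, findim hB s]
  · simp


end BMAux

/-- For every `ν ∈ ℝ` and `x > 0`,
`τ^{(−ν)}_{x,0} = inf{t ≥ 0 : ∫_0^t exp(−2B_s + 2νs) ds = x}` has the same law as
`H^{(ν)}_x = inf{t ≥ 0 : ∫_0^t exp(2B_s + 2νs) ds = x}`. -/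
theorem tau_eqDist_H
    {Ω : Type*} [MeasurableSpace Ω] (P : Measure Ω) [IsProbabilityMeasure P]
    (B : ℝ → Ω → ℝ) (hB : IsStandardBrownianMotion P B) (ν x : ℝ) (hx : 0 < x) :
    P.map (hitTime (fun t ω => ∫ u in (0:ℝ)..t, Real.exp (-(2 * B u ω) + 2 * ν * u)) x) =
      P.map (hitTime (fun t ω => ∫ u in (0:ℝ)..t, Real.exp (2 * B u ω + 2 * ν * u)) x) := by
  have hιm : Measurable (fun ω (p : QNN) => B (p.1 : ℝ) ω) :=
    measurable_pi_lambda _ fun p => hB.measurable _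
  have hι'm : Measurable (fun ω (p : QNN) => -B (p.1 : ℝ) ω) :=
    measurable_pi_lambda _ fun p => (hB.measurable _).neg
  have hae' : hitTime (fun t ω => ∫ u in (0:ℝ)..t, Real.exp (2 * B u ω + 2 * ν * u)) x
      =ᵐ[P] (Gfun ν x) ∘ (fun ω (p : QNN) => B (p.1 : ℝ) ω) := by
    filter_upwards [hB.cont] with ω hω
    rw [Function.comp_apply,
      show (fun p : QNN => B (p.1 : ℝ) ω) = (fun p : QNN => (fun u => B u ω) (p.1 : ℝ)) from rfl,
      Gfun_eval ν x hx hω]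
    rfl
  have hae : hitTime (fun t ω => ∫ u in (0:ℝ)..t, Real.exp (-(2 * B u ω) + 2 * ν * u)) x
      =ᵐ[P] (Gfun ν x) ∘ (fun ω (p : QNN) => -B (p.1 : ℝ) ω) := by
    filter_upwards [hB.cont] with ω hω
    rw [Function.comp_apply,
      show (fun p : QNN => -B (p.1 : ℝ) ω) = (fun p : QNN => (fun u => -B u ω) (p.1 : ℝ)) from rfl,
      Gfun_eval ν x hx (b := fun u => -B u ω) hω.neg]
    have h2 : ∀ t : ℝ, (∫ u in (0:ℝ)..t, Real.exp (2 * (-B u ω) + 2 * ν * u))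
        = ∫ u in (0:ℝ)..t, Real.exp (-(2 * B u ω) + 2 * ν * u) := by
      intro t
      apply intervalIntegral.integral_congr
      intro u _
      norm_num
    simp only [h2]
    rfl
  rw [Measure.map_congr hae, Measure.map_congr hae',
    ← Measure.map_map (measurable_Gfun ν x) hι'm,
    ← Measure.map_map (measurable_Gfun ν x) hιm, pathlaw hB]
end

section
/- For ν ∈ ℝ, y ∈ ℝ and t ≥ 0, the mean of the geometric Brownian motion with affine drift Y^{(ν)} started at y is E[Y^{(ν)}_t] = y·e^{2(ν+1)t} − (e^{2(ν+1)t} − 1)/(2(ν+1)) if ν ≠ −1, and E[Y^{(−1)}_t] = y − t if ν = −1. -/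
open MeasureTheory ProbabilityTheory Real Filter Set
open scoped ENNReal NNReal

lemma exp_mul_gaussianPDFReal {v : ℝ≥0} (hv : v ≠ 0) (c x : ℝ) :
    Real.exp (c * x) * gaussianPDFReal 0 v x
      = Real.exp (c ^ 2 * v / 2) * gaussianPDFReal (c * v) v x := by
  have hv' : (v : ℝ) ≠ 0 := by exact_mod_cast hv
  have hv0 : (0:ℝ) < v := lt_of_le_of_ne v.coe_nonneg (Ne.symm hv')
  unfold gaussianPDFReal
  have h : c * x + -(x - 0) ^ 2 / (2 * v) = c ^ 2 * v / 2 + -(x - c * v) ^ 2 / (2 * v) := by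
    field_simp
    ring
  calc Real.exp (c * x) * ((Real.sqrt (2 * Real.pi * v))⁻¹ * Real.exp (-(x - 0) ^ 2 / (2 * v)))
      = (Real.sqrt (2 * Real.pi * v))⁻¹ * Real.exp (c * x + -(x - 0) ^ 2 / (2 * v)) := by
        rw [Real.exp_add]; ring
    _ = (Real.sqrt (2 * Real.pi * v))⁻¹ * Real.exp (c ^ 2 * v / 2 + -(x - c * v) ^ 2 / (2 * v)) := by
        rw [h]
    _ = Real.exp (c ^ 2 * v / 2) * ((Real.sqrt (2 * Real.pi * v))⁻¹ * Real.exp (-(x - c * v) ^ 2 / (2 * v))) := by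
        rw [Real.exp_add]; ring

lemma integrable_exp_mul_gaussianReal (c : ℝ) (v : ℝ≥0) :
    Integrable (fun x => Real.exp (c * x)) (gaussianReal 0 v) := by
  by_cases hv : v = 0
  · subst hv
    rw [gaussianReal_zero_var]
    exact (integrable_const (Real.exp (c * 0))).congr (ae_eq_dirac (fun x => Real.exp (c * x))).symm
  · rw [gaussianReal_of_var_ne_zero _ hv]
    have hmeas : Measurable fun x => (gaussianPDFReal 0 v x).toNNReal :=
      (measurable_gaussianPDFReal 0 v).real_toNNReal
    have : (gaussianPDF 0 v) = fun x => ((gaussianPDFReal 0 v x).toNNReal : ℝ≥0∞) := rfl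
    rw [this, integrable_withDensity_iff_integrable_smul hmeas]
    have heq : (fun x => ((gaussianPDFReal 0 v x).toNNReal : ℝ) • Real.exp (c * x))
        = fun x => Real.exp (c ^ 2 * v / 2) * gaussianPDFReal (c * v) v x := by
      funext x
      rw [smul_eq_mul, Real.coe_toNNReal _ (gaussianPDFReal_nonneg 0 v x), mul_comm,
        exp_mul_gaussianPDFReal hv]
    rw [show (fun x => ((gaussianPDFReal 0 v x).toNNReal : ℝ≥0) • Real.exp (c * x)) = fun x => ((gaussianPDFReal 0 v x).toNNReal : ℝ) • Real.exp (c * x) from rfl, heq]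
    exact (integrable_gaussianPDFReal (c * v) v).const_mul _

lemma integral_exp_mul_gaussianReal (c : ℝ) (v : ℝ≥0) :
    ∫ x, Real.exp (c * x) ∂(gaussianReal 0 v) = Real.exp (c ^ 2 * v / 2) := by
  by_cases hv : v = 0
  · subst hv
    rw [gaussianReal_zero_var, integral_dirac]
    simp
  · rw [gaussianReal_of_var_ne_zero _ hv]
    have hmeas : Measurable fun x => (gaussianPDFReal 0 v x).toNNReal :=
      (measurable_gaussianPDFReal 0 v).real_toNNReal
    have : (gaussianPDF 0 v) = fun x => ((gaussianPDFReal 0 v x).toNNReal : ℝ≥0∞) := rfl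
    rw [this, integral_withDensity_eq_integral_smul hmeas]
    have heq : (fun x => ((gaussianPDFReal 0 v x).toNNReal : ℝ≥0) • Real.exp (c * x))
        = fun x => Real.exp (c ^ 2 * v / 2) * gaussianPDFReal (c * v) v x := by
      funext x
      rw [NNReal.smul_def, smul_eq_mul, Real.coe_toNNReal _ (gaussianPDFReal_nonneg 0 v x),
        mul_comm, exp_mul_gaussianPDFReal hv]
    rw [heq, integral_const_mul, integral_gaussianPDFReal_eq_one _ hv, mul_one]

lemma integrable_exp_incr {Ω : Type*} [MeasurableSpace Ω] (P : Measure Ω)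
    {B : ℝ → Ω → ℝ} (hm : ∀ t, Measurable (B t))
    (hmap : ∀ s t : ℝ, 0 ≤ s → s ≤ t →
      P.map (fun ω => B t ω - B s ω) = gaussianReal 0 (Real.toNNReal (t - s)))
    (c s t : ℝ) (hs : 0 ≤ s) (hst : s ≤ t) :
    Integrable (fun ω => Real.exp (c * (B t ω - B s ω))) P ∧
      ∫ ω, Real.exp (c * (B t ω - B s ω)) ∂P = Real.exp (c ^ 2 * (t - s) / 2) := by
  have hXm : Measurable fun ω => B t ω - B s ω := (hm t).sub (hm s)
  have hcont : Continuous fun x : ℝ => Real.exp (c * x) :=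
    Real.continuous_exp.comp (continuous_const.mul continuous_id)
  have hmap' := hmap s t hs hst
  have hcoe : ((Real.toNNReal (t - s) : ℝ≥0) : ℝ) = t - s :=
    Real.coe_toNNReal _ (by linarith)
  constructor
  · have h1 := integrable_exp_mul_gaussianReal c (Real.toNNReal (t - s))
    rw [← hmap'] at h1
    exact (integrable_map_measure hcont.aestronglyMeasurable hXm.aemeasurable).mp h1
  · rw [← integral_map hXm.aemeasurable hcont.aestronglyMeasurable, hmap',
      integral_exp_mul_gaussianReal, hcoe]

lemma measurable_approxB {Ω : Type*} [MeasurableSpace Ω] {B : ℝ → Ω → ℝ}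
    (hm : ∀ t, Measurable (B t)) (n : ℕ) :
    Measurable fun p : ℝ × Ω => B (((⌈p.1 * ((n : ℝ) + 1)⌉ : ℤ) : ℝ) / ((n : ℝ) + 1)) p.2 := by
  have hF : Measurable fun q : Ω × ℤ => B (((q.2 : ℤ) : ℝ) / ((n : ℝ) + 1)) q.1 :=
    measurable_from_prod_countable_left fun k => by simpa using hm (((k:ℤ):ℝ)/((n:ℝ)+1))
  exact hF.comp ((measurable_snd).prodMk ((measurable_fst.mul_const _).ceil))

lemma tendsto_approx (s : ℝ) :
    Tendsto (fun n : ℕ => ((⌈s * ((n : ℝ) + 1)⌉ : ℤ) : ℝ) / ((n : ℝ) + 1)) atTop (nhds s) := by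
  have hpos : ∀ n : ℕ, (0:ℝ) < (n : ℝ) + 1 := fun n => by positivity
  have hlow : ∀ n : ℕ, s ≤ ((⌈s * ((n : ℝ) + 1)⌉ : ℤ) : ℝ) / ((n : ℝ) + 1) := by
    intro n
    rw [le_div_iff₀ (hpos n)]
    exact Int.le_ceil _
  have hup : ∀ n : ℕ, ((⌈s * ((n : ℝ) + 1)⌉ : ℤ) : ℝ) / ((n : ℝ) + 1) ≤ s + 1 / ((n : ℝ) + 1) := by
    intro n
    rw [div_le_iff₀ (hpos n)]
    have := (Int.ceil_lt_add_one (s * ((n : ℝ) + 1))).le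
    calc ((⌈s * ((n : ℝ) + 1)⌉ : ℤ) : ℝ) ≤ s * ((n : ℝ) + 1) + 1 := this
      _ = (s + 1 / ((n : ℝ) + 1)) * ((n : ℝ) + 1) := by field_simp
  have hupt : Tendsto (fun n : ℕ => s + 1 / ((n : ℝ) + 1)) atTop (nhds s) := by
    have := tendsto_one_div_add_atTop_nhds_zero_nat (𝕜 := ℝ)
    simpa using tendsto_const_nhds.add this
  exact tendsto_of_tendsto_of_tendsto_of_le_of_le tendsto_const_nhds hupt hlow hup

lemma integral_exp_antideriv {a : ℝ} (t : ℝ) (haz : a ≠ 0) :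
    ∫ s in (0:ℝ)..t, Real.exp (a * (t - s)) = (Real.exp (a * t) - 1) / a := by
  have hder : ∀ s ∈ Set.uIcc (0:ℝ) t,
      HasDerivAt (fun s => Real.exp (a * t - a * s) * (-a)⁻¹) (Real.exp (a * (t - s))) s := by
    intro s _
    have h1 : HasDerivAt (fun s : ℝ => a * t - a * s) (-a) s := by
      simpa using ((hasDerivAt_id s).const_mul a).const_sub (a * t)
    have h2 := (h1.exp).mul_const (-a)⁻¹
    rw [show Real.exp (a * (t - s)) = Real.exp (a * t - a * s) * -a * (-a)⁻¹ by
      rw [mul_sub, mul_assoc, mul_inv_cancel₀ (neg_ne_zero.mpr haz), mul_one]]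
    exact h2
  have hci : IntervalIntegrable (fun s => Real.exp (a * (t - s))) volume 0 t :=
    (Real.continuous_exp.comp
      (continuous_const.mul (continuous_const.sub continuous_id))).intervalIntegrable 0 t
  rw [intervalIntegral.integral_eq_sub_of_hasDerivAt hder hci, sub_self, Real.exp_zero,
    mul_zero, sub_zero, one_mul]
  field_simp
  ring

noncomputable def auxH {Ω : Type*} (B : ℝ → Ω → ℝ) (ν t : ℝ) (p : ℝ × Ω) : ℝ :=
  Real.exp (2 * (B t p.2 - B p.1 p.2) + 2 * ν * (t - p.1))

lemma auxH_apply {Ω : Type*} (B : ℝ → Ω → ℝ) (ν t s : ℝ) (ω : Ω) :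
    auxH B ν t (s, ω) = Real.exp (2 * (B t ω - B s ω) + 2 * ν * (t - s)) := rfl

/-- mean of the geometric Brownian motion with affine drift `Y^{(ν)}`. -/
theorem mean_procY
    {Ω : Type*} [MeasurableSpace Ω] (P : Measure Ω) [IsProbabilityMeasure P]
    (B : ℝ → Ω → ℝ) (hB : IsStandardBrownianMotion P B)
    (ν y t : ℝ) (ht : 0 ≤ t) :
    (ν ≠ -1 → (∫ ω, procY B ν y t ω ∂P) =
        y * Real.exp (2 * (ν + 1) * t) -
          (Real.exp (2 * (ν + 1) * t) - 1) / (2 * (ν + 1))) ∧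
    (ν = -1 → (∫ ω, procY B ν y t ω ∂P) = y - t) := by
  have hm := hB.measurable
  set a : ℝ := 2 * (ν + 1) with ha
  set μ1 : Measure ℝ := volume.restrict (Set.Ioc 0 t) with hμ1
  set H : ℝ × Ω → ℝ := auxH B ν t with hH
  -- a.e. strong measurability of the random field
  have hBfield : AEStronglyMeasurable (fun p : ℝ × Ω => B p.1 p.2) (μ1.prod P) := by
    apply aestronglyMeasurable_of_tendsto_ae (u := atTop)
      (f := fun n : ℕ => fun p : ℝ × Ω => B (((⌈p.1 * ((n:ℝ)+1)⌉ : ℤ) : ℝ) / ((n:ℝ)+1)) p.2)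
      (fun n => (measurable_approxB hm n).aestronglyMeasurable)
    have hNb0 : P (toMeasurable P {ω | ¬ Continuous fun u => B u ω}) = 0 := by
      rw [measure_toMeasurable]
      exact ae_iff.mp hB.cont
    have hprod : (μ1.prod P) (Set.univ ×ˢ toMeasurable P {ω | ¬ Continuous fun u => B u ω}) = 0 := by
      rw [Measure.prod_prod, hNb0, mul_zero]
    rw [ae_iff]
    refine measure_mono_null ?_ hprod
    intro p hp
    simp only [Set.mem_setOf_eq] at hp
    refine ⟨Set.mem_univ _, ?_⟩
    by_contra hc
    apply hp
    have hcont : Continuous fun u => B u p.2 := by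
      by_contra h
      exact hc (subset_toMeasurable P _ h)
    exact (hcont.tendsto p.1).comp (tendsto_approx p.1)
  have hHmeas : AEStronglyMeasurable H (μ1.prod P) := by
    have h1 : AEMeasurable (fun p : ℝ × Ω => 2 * (B t p.2 - B p.1 p.2) + 2 * ν * (t - p.1))
        (μ1.prod P) := by
      refine AEMeasurable.add ?_ ?_
      · exact (AEMeasurable.sub ((hm t).comp measurable_snd).aemeasurable
          hBfield.aemeasurable).const_mul 2
      · exact ((measurable_fst.const_sub t).const_mul (2*ν)).aemeasurable
    rw [hH]
    exact (Real.measurable_exp.comp_aemeasurable h1).aestronglyMeasurable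
  -- slice integrals
  have hslice : ∀ s : ℝ, 0 ≤ s → s ≤ t →
      Integrable (fun ω => H (s, ω)) P ∧ ∫ ω, H (s, ω) ∂P = Real.exp (a * (t - s)) := by
    intro s hs hst
    have hg := integrable_exp_incr P hm hB.gauss_incr 2 s t hs hst
    have hfun : (fun ω => H (s, ω))
        = fun ω => Real.exp (2 * ν * (t - s)) * Real.exp (2 * (B t ω - B s ω)) := by
      funext ω
      rw [hH, auxH_apply, ← Real.exp_add]
      congr 1
      ring
    constructor
    · rw [hfun]; exact hg.1.const_mul _
    · rw [hfun, integral_const_mul, hg.2, ← Real.exp_add]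
      congr 1
      rw [ha]; ring
  -- integrability on the product
  have hHint : Integrable H (μ1.prod P) := by
    rw [hμ1, integrable_prod_iff hHmeas]
    constructor
    · filter_upwards [ae_restrict_mem measurableSet_Ioc] with s hs
      exact (hslice s hs.1.le hs.2).1
    · have hc : Continuous fun s : ℝ => Real.exp (a * (t - s)) :=
        Real.continuous_exp.comp (continuous_const.mul (continuous_const.sub continuous_id))
      refine (hc.integrableOn_Ioc).congr ?_
      filter_upwards [ae_restrict_mem measurableSet_Ioc] with s hs
      have hnor : (fun ω => ‖H (s, ω)‖) = fun ω => H (s, ω) := by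
        funext ω
        rw [hH, auxH_apply]
        exact Real.norm_of_nonneg (Real.exp_pos _).le
      rw [hnor, (hslice s hs.1.le hs.2).2]
  -- pointwise decomposition of procY
  have hpt : ∀ ω, procY B ν y t ω
      = y * Real.exp (2 * (B t ω + ν * t)) - ∫ s, H (s, ω) ∂μ1 := by
    intro ω
    unfold procY
    rw [mul_sub, mul_comm (Real.exp (2 * (B t ω + ν * t))) y]
    congr 1
    rw [← intervalIntegral.integral_const_mul, hμ1, ← intervalIntegral.integral_of_le ht]
    refine intervalIntegral.integral_congr fun s _ => ?_
    rw [hH, auxH_apply, ← Real.exp_add]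
    congr 1
    ring
  -- first moment
  have hI1core := integrable_exp_incr P hm hB.gauss_incr 2 0 t le_rfl ht
  have hI1eq : (fun ω => y * Real.exp (2 * (B t ω + ν * t))) =ᵐ[P]
      (fun ω => (y * Real.exp (2 * ν * t)) * Real.exp (2 * (B t ω - B 0 ω))) := by
    filter_upwards [hB.init] with ω h0
    rw [h0, mul_assoc, ← Real.exp_add]
    congr 2
    ring
  have hI1 : Integrable (fun ω => y * Real.exp (2 * (B t ω + ν * t))) P :=
    (hI1core.1.const_mul _).congr hI1eq.symm
  have hI1val : ∫ ω, y * Real.exp (2 * (B t ω + ν * t)) ∂P = y * Real.exp (a * t) := by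
    rw [integral_congr_ae hI1eq, integral_const_mul, hI1core.2, mul_assoc, ← Real.exp_add]
    congr 2
    rw [ha]; ring
  have hI2int : Integrable (fun ω => ∫ s, H (s, ω) ∂μ1) P := hHint.integral_prod_right
  have hswap : ∫ ω, (∫ s, H (s, ω) ∂μ1) ∂P = ∫ s, (∫ ω, H (s, ω) ∂P) ∂μ1 :=
    (integral_integral_swap (f := fun s ω => H (s, ω)) hHint).symm
  have hI2val : ∫ s, (∫ ω, H (s, ω) ∂P) ∂μ1 = ∫ s in (0:ℝ)..t, Real.exp (a * (t - s)) := by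
    rw [intervalIntegral.integral_of_le ht, hμ1]
    refine integral_congr_ae ?_
    filter_upwards [ae_restrict_mem measurableSet_Ioc] with s hs
    exact (hslice s hs.1.le hs.2).2
  have hmain : ∫ ω, procY B ν y t ω ∂P
      = y * Real.exp (a * t) - ∫ s in (0:ℝ)..t, Real.exp (a * (t - s)) := by
    calc ∫ ω, procY B ν y t ω ∂P
        = ∫ ω, (y * Real.exp (2 * (B t ω + ν * t)) - ∫ s, H (s, ω) ∂μ1) ∂P :=
          integral_congr_ae (Filter.Eventually.of_forall hpt)
      _ = y * Real.exp (a * t) - ∫ s in (0:ℝ)..t, Real.exp (a * (t - s)) := by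
          rw [integral_sub hI1 hI2int, hI1val, hswap, hI2val]
  constructor
  · intro hν
    have haz : a ≠ 0 := by
      rw [ha]
      intro h
      apply hν
      linarith
    have hanti := integral_exp_antideriv (a := a) t haz
    rw [hmain, hanti]
  · intro hν
    have haz : a = 0 := by rw [ha, hν]; ring
    rw [hmain, haz]
    simp
end

section
/- For ν ∈ ℝ, y > 0 and r* > 2(ν+1), the expectation E[∫_0^{τ^{(ν)}_{y,0}} e^{−r* s} Y^{(ν)}_s ds] is at most y/(r* − 2(ν+1)); in particular, E[Y^{(ν)}_t · 1{Y^{(ν)}_t > 0}] ≤ y·e^{2(ν+1)t} for every t ≥ 0. -/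
open MeasureTheory ProbabilityTheory Real Filter Set
open scoped ENNReal NNReal

lemma aux_lintegral_exp_gauss (v : ℝ≥0) :
    ∫⁻ x, ENNReal.ofReal (Real.exp (2 * x)) ∂(ProbabilityTheory.gaussianReal 0 v)
      = ENNReal.ofReal (Real.exp (2 * v)) := by
  by_cases hv : v = 0
  · subst hv
    simp [ProbabilityTheory.gaussianReal, lintegral_dirac]
  · rw [ProbabilityTheory.gaussianReal_of_var_ne_zero _ hv,
      lintegral_withDensity_eq_lintegral_mul _ (ProbabilityTheory.measurable_gaussianPDF _ _)
        (by fun_prop : Measurable fun x : ℝ => ENNReal.ofReal (Real.exp (2 * x)))]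
    have hv' : (0:ℝ) < (v:ℝ) := lt_of_le_of_ne v.coe_nonneg (by exact_mod_cast (Ne.symm hv))
    have key : ∀ x : ℝ, (ProbabilityTheory.gaussianPDF 0 v * fun x => ENNReal.ofReal (Real.exp (2 * x))) x
        = ENNReal.ofReal (Real.exp (2 * v)) * ProbabilityTheory.gaussianPDF (2 * v) v x := by
      intro x
      simp only [Pi.mul_apply, ProbabilityTheory.gaussianPDF]
      rw [← ENNReal.ofReal_mul (ProbabilityTheory.gaussianPDFReal_nonneg _ _ _),
        ← ENNReal.ofReal_mul (Real.exp_nonneg _)]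
      congr 1
      unfold ProbabilityTheory.gaussianPDFReal
      have hexp : Real.exp (-(x - 0)^2/(2*(v:ℝ))) * Real.exp (2*x)
          = Real.exp (2*(v:ℝ)) * Real.exp (-(x - 2*(v:ℝ))^2/(2*(v:ℝ))) := by
        rw [← Real.exp_add, ← Real.exp_add]
        congr 1
        field_simp
        ring
      calc ((Real.sqrt (2 * Real.pi * v))⁻¹ * Real.exp (-(x - 0)^2/(2*(v:ℝ)))) * Real.exp (2*x)
          = (Real.sqrt (2 * Real.pi * v))⁻¹ * (Real.exp (-(x - 0)^2/(2*(v:ℝ))) * Real.exp (2*x)) := by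
            ring
        _ = Real.exp (2*(v:ℝ)) * ((Real.sqrt (2 * Real.pi * v))⁻¹ * Real.exp (-(x - 2*(v:ℝ))^2/(2*(v:ℝ)))) := by
            rw [hexp]; ring
    calc ∫⁻ x, (ProbabilityTheory.gaussianPDF 0 v * fun x => ENNReal.ofReal (Real.exp (2 * x))) x
        = ∫⁻ x, ENNReal.ofReal (Real.exp (2 * v)) * ProbabilityTheory.gaussianPDF (2 * v) v x := by
          exact lintegral_congr key
      _ = ENNReal.ofReal (Real.exp (2 * v)) * ∫⁻ x, ProbabilityTheory.gaussianPDF (2 * v) v x :=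
          lintegral_const_mul' _ _ ENNReal.ofReal_ne_top
      _ = ENNReal.ofReal (Real.exp (2 * v)) := by
          rw [ProbabilityTheory.lintegral_gaussianPDF_eq_one _ hv, mul_one]

lemma aux_lintegral_exp_bm {Ω : Type*} [MeasurableSpace Ω] {P : Measure Ω}
    {B : ℝ → Ω → ℝ} (hB : IsStandardBrownianMotion P B) {t : ℝ} (ht : 0 ≤ t) :
    ∫⁻ ω, ENNReal.ofReal (Real.exp (2 * B t ω)) ∂P = ENNReal.ofReal (Real.exp (2 * t)) := by
  have h1 : ∫⁻ ω, ENNReal.ofReal (Real.exp (2 * B t ω)) ∂P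
      = ∫⁻ ω, ENNReal.ofReal (Real.exp (2 * (B t ω - B 0 ω))) ∂P := by
    refine lintegral_congr_ae ?_
    filter_upwards [hB.init] with ω h0
    rw [h0, sub_zero]
  have h2 : ∫⁻ ω, ENNReal.ofReal (Real.exp (2 * (B t ω - B 0 ω))) ∂P
      = ∫⁻ x, ENNReal.ofReal (Real.exp (2 * x)) ∂(P.map (fun ω => B t ω - B 0 ω)) :=
    (lintegral_map (by fun_prop : Measurable fun x : ℝ => ENNReal.ofReal (Real.exp (2 * x)))
      ((hB.measurable t).sub (hB.measurable 0))).symm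
  rw [h1, h2, hB.gauss_incr 0 t le_rfl ht, aux_lintegral_exp_gauss]
  congr 2
  rw [sub_zero, Real.coe_toNNReal _ ht]

lemma aux_procY_le {Ω : Type*} (B : ℝ → Ω → ℝ) (ν y : ℝ) {t : ℝ} (ht : 0 ≤ t) (ω : Ω) :
    procY B ν y t ω ≤ y * Real.exp (2 * (B t ω + ν * t)) := by
  unfold procY
  rw [mul_comm y]
  refine mul_le_mul_of_nonneg_left ?_ (Real.exp_nonneg _)
  have h : 0 ≤ ∫ s in (0:ℝ)..t, Real.exp (-(2 * (B s ω + ν * s))) :=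
    intervalIntegral.integral_nonneg ht (fun u _ => Real.exp_nonneg _)
  linarith

/-- the bound `E[∫_0^{τ_{y,0}} e^{−r*s} Y_s ds] ≤ y/(r* − 2(ν+1))` for
`r* > 2(ν+1)`, and `E[Y_t 1{Y_t > 0}] ≤ y e^{2(ν+1)t}` for all `t ≥ 0`. -/
theorem discounted_procY_bound
    {Ω : Type*} [MeasurableSpace Ω] (P : Measure Ω) [IsProbabilityMeasure P]
    (B : ℝ → Ω → ℝ) (hB : IsStandardBrownianMotion P B)
    (ν y rs : ℝ) (hy : 0 < y) (hrs : 2 * (ν + 1) < rs) :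
    (∫⁻ ω, (∫⁻ s in {s : ℝ | 0 ≤ s ∧ ENNReal.ofReal s < hitTime (procY B ν y) 0 ω},
        ENNReal.ofReal (Real.exp (-rs * s) * procY B ν y s ω)) ∂P) ≤
      ENNReal.ofReal (y / (rs - 2 * (ν + 1))) ∧
    ∀ t : ℝ, 0 ≤ t →
      (∫⁻ ω, (if 0 < procY B ν y t ω then ENNReal.ofReal (procY B ν y t ω) else 0) ∂P) ≤
        ENNReal.ofReal (y * Real.exp (2 * (ν + 1) * t)) := by
  classical
  -- a measurable null set outside which paths are continuous
  obtain ⟨N, hN_sub, hN_meas, hN_null⟩ :=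
    exists_measurable_superset_of_null (ae_iff.mp hB.cont)
  set B' : ℝ → Ω → ℝ := fun t ω => if ω ∈ N then 0 else B t ω with hB'def
  have hB'meas : ∀ t, Measurable (B' t) := fun t =>
    Measurable.ite hN_meas measurable_const (hB.measurable t)
  have hB'cont : ∀ ω, Continuous fun t => B' t ω := by
    intro ω
    by_cases hω : ω ∈ N
    · simp only [hB'def, if_pos hω]; exact continuous_const
    · simp only [hB'def, if_neg hω]
      by_contra hc
      exact hω (hN_sub hc)
  have hB'uncurry : Measurable (Function.uncurry B') :=
    measurable_uncurry_of_continuous_of_measurable hB'cont hB'meas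
  have hae : ∀ᵐ ω ∂P, ω ∉ N := by
    rw [ae_iff]
    simpa using hN_null
  -- Part 2
  have part2 : ∀ t : ℝ, 0 ≤ t →
      (∫⁻ ω, (if 0 < procY B ν y t ω then ENNReal.ofReal (procY B ν y t ω) else 0) ∂P) ≤
        ENNReal.ofReal (y * Real.exp (2 * (ν + 1) * t)) := by
    intro t ht
    have hb : ∀ ω, (if 0 < procY B ν y t ω then ENNReal.ofReal (procY B ν y t ω) else 0)
        ≤ ENNReal.ofReal ((y * Real.exp (2 * ν * t)) * Real.exp (2 * B t ω)) := by
      intro ω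
      have hbd : procY B ν y t ω ≤ (y * Real.exp (2 * ν * t)) * Real.exp (2 * B t ω) := by
        refine le_trans (aux_procY_le B ν y ht ω) (le_of_eq ?_)
        rw [show 2 * (B t ω + ν * t) = 2 * ν * t + 2 * B t ω by ring, Real.exp_add, ← mul_assoc]
      split
      · exact ENNReal.ofReal_le_ofReal hbd
      · exact bot_le
    calc (∫⁻ ω, (if 0 < procY B ν y t ω then ENNReal.ofReal (procY B ν y t ω) else 0) ∂P)
        ≤ ∫⁻ ω, ENNReal.ofReal ((y * Real.exp (2 * ν * t)) * Real.exp (2 * B t ω)) ∂P :=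
          lintegral_mono hb
      _ = ENNReal.ofReal (y * Real.exp (2 * ν * t)) *
            ∫⁻ ω, ENNReal.ofReal (Real.exp (2 * B t ω)) ∂P := by
          simp_rw [ENNReal.ofReal_mul (by positivity : (0:ℝ) ≤ y * Real.exp (2 * ν * t))]
          exact lintegral_const_mul' _ _ ENNReal.ofReal_ne_top
      _ = ENNReal.ofReal (y * Real.exp (2 * ν * t)) * ENNReal.ofReal (Real.exp (2 * t)) := by
          rw [aux_lintegral_exp_bm hB ht]
      _ = ENNReal.ofReal (y * Real.exp (2 * (ν + 1) * t)) := by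
          rw [← ENNReal.ofReal_mul (by positivity), mul_assoc, ← Real.exp_add]
          congr 2
          ring
  refine ⟨?_, part2⟩
  -- Part 1
  set a : ℝ := rs - 2 * (ν + 1) with ha
  have ha' : 0 < a := by rw [ha]; linarith
  set g : Ω → ℝ → ℝ≥0∞ := fun ω s =>
    ENNReal.ofReal (y * Real.exp ((2 * ν - rs) * s) * Real.exp (2 * B' s ω)) with hg
  -- pointwise bound of the inner integral
  have stepA : ∀ᵐ ω ∂P,
      (∫⁻ s in {s : ℝ | 0 ≤ s ∧ ENNReal.ofReal s < hitTime (procY B ν y) 0 ω},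
        ENNReal.ofReal (Real.exp (-rs * s) * procY B ν y s ω))
      ≤ ∫⁻ s in Ici (0:ℝ), g ω s := by
    filter_upwards [hae] with ω hω
    have hωB : ∀ s, B' s ω = B s ω := fun s => by simp [hB'def, hω]
    have hgc : Continuous fun s : ℝ => g ω s := by
      refine ENNReal.continuous_ofReal.comp ?_
      exact (continuous_const.mul (Real.continuous_exp.comp
          ((continuous_const.mul continuous_id)))).mul
        (Real.continuous_exp.comp (continuous_const.mul (hB'cont ω)))
    refine le_trans (setLIntegral_mono hgc.measurable ?_) (lintegral_mono_set ?_)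
    · intro s hs
      obtain ⟨hs0, -⟩ := hs
      rw [hg]
      simp only
      rw [hωB s]
      refine ENNReal.ofReal_le_ofReal ?_
      calc Real.exp (-rs * s) * procY B ν y s ω
          ≤ Real.exp (-rs * s) * (y * Real.exp (2 * (B s ω + ν * s))) :=
            mul_le_mul_of_nonneg_left (aux_procY_le B ν y hs0 ω) (Real.exp_nonneg _)
        _ = y * Real.exp ((2 * ν - rs) * s) * Real.exp (2 * B s ω) := by
            rw [show 2 * (B s ω + ν * s) = 2 * B s ω + 2 * ν * s by ring, Real.exp_add,
              show (2 * ν - rs) * s = 2 * ν * s + (-rs * s) by ring, Real.exp_add]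
            ring
    · exact fun s hs => hs.1
  have stepB := lintegral_mono_ae stepA
  -- Tonelli
  have hswap : (∫⁻ ω, ∫⁻ s in Ici (0:ℝ), g ω s ∂(volume : Measure ℝ) ∂P)
      = ∫⁻ s in Ici (0:ℝ), ∫⁻ ω, g ω s ∂P ∂(volume : Measure ℝ) := by
    refine lintegral_lintegral_swap ?_
    refine Measurable.aemeasurable ?_
    have hBm : Measurable fun p : Ω × ℝ => B' p.2 p.1 := hB'uncurry.comp measurable_swap
    exact ENNReal.measurable_ofReal.comp
      (((measurable_const.mul (Real.measurable_exp.comp (measurable_snd.const_mul _))).mul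
        (Real.measurable_exp.comp (hBm.const_mul 2))))
  -- compute the ω-integral for fixed s
  have stepD : ∀ s ∈ Ici (0:ℝ), (∫⁻ ω, g ω s ∂P) = ENNReal.ofReal (y * Real.exp (-a * s)) := by
    intro s hs
    have h2 : (∫⁻ ω, ENNReal.ofReal (Real.exp (2 * B' s ω)) ∂P)
        = ENNReal.ofReal (Real.exp (2 * s)) := by
      have hcongr : (∫⁻ ω, ENNReal.ofReal (Real.exp (2 * B' s ω)) ∂P)
          = ∫⁻ ω, ENNReal.ofReal (Real.exp (2 * B s ω)) ∂P := by
        refine lintegral_congr_ae ?_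
        filter_upwards [hae] with ω hω
        simp [hB'def, hω]
      rw [hcongr, aux_lintegral_exp_bm hB hs]
    calc (∫⁻ ω, g ω s ∂P)
        = ENNReal.ofReal (y * Real.exp ((2 * ν - rs) * s)) *
            ∫⁻ ω, ENNReal.ofReal (Real.exp (2 * B' s ω)) ∂P := by
          simp_rw [hg,
            ENNReal.ofReal_mul (by positivity : (0:ℝ) ≤ y * Real.exp ((2 * ν - rs) * s))]
          exact lintegral_const_mul' _ _ ENNReal.ofReal_ne_top
      _ = ENNReal.ofReal (y * Real.exp ((2 * ν - rs) * s)) * ENNReal.ofReal (Real.exp (2 * s)) := by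
          rw [h2]
      _ = ENNReal.ofReal (y * Real.exp (-a * s)) := by
          rw [← ENNReal.ofReal_mul (by positivity), mul_assoc, ← Real.exp_add]
          congr 2
          rw [ha]
          ring
  have stepE : (∫⁻ s in Ici (0:ℝ), ∫⁻ ω, g ω s ∂P ∂(volume : Measure ℝ))
      = ∫⁻ s in Ici (0:ℝ), ENNReal.ofReal (y * Real.exp (-a * s)) ∂(volume : Measure ℝ) :=
    setLIntegral_congr_fun measurableSet_Ici stepD
  -- compute the s-integral
  have stepF : (∫⁻ s in Ici (0:ℝ), ENNReal.ofReal (y * Real.exp (-a * s)) ∂(volume : Measure ℝ))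
      = ENNReal.ofReal (y / (rs - 2 * (ν + 1))) := by
    rw [setLIntegral_congr (Ioi_ae_eq_Ici (a := (0:ℝ))).symm]
    have hint : IntegrableOn (fun s : ℝ => y * Real.exp (-a * s)) (Ioi (0:ℝ)) :=
      (exp_neg_integrableOn_Ioi 0 ha').const_mul y
    rw [← ofReal_integral_eq_lintegral_ofReal hint (ae_of_all _ fun s => by positivity)]
    congr 1
    rw [MeasureTheory.integral_const_mul]
    have hI : (∫ s in Ioi (0:ℝ), Real.exp (-a * s)) = a⁻¹ := by
      have h := integral_comp_mul_left_Ioi (fun x : ℝ => Real.exp (-x)) 0 ha'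
      simp only [mul_zero, smul_eq_mul, integral_exp_neg_Ioi, neg_zero, Real.exp_zero,
        mul_one] at h
      rw [show (fun s : ℝ => Real.exp (-a * s)) = fun s : ℝ => Real.exp (-(a * s)) by
        funext s; rw [neg_mul]]
      exact h
    rw [hI, ← ha, div_eq_mul_inv]
  refine le_trans stepB (le_of_eq ?_)
  rw [hswap, stepE, stepF]
end
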